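/- The magnitude function of a finite subset of Euclidean space is real analytic on (0, ∞); in particular, for every t > 0 the scaled similarity matrix ζ_{tX}(i,j) = exp(-t‖x_i - x_j‖) is invertible, and t ↦ Mag(tX) is continuous (indeed smooth) on (0, ∞). -/

import Mathlib

open Matrix Real

open MeasureTheory Set

open Real MeasureTheory Set Matrix

lemma glasser_deriv {c : ℝ} {s : ℝ} (hs : s ∈ Ioi (0:ℝ)) :
    HasDerivWithinAt (fun s : ℝ => s - c/s) (1 + c/s^2) (Ioi 0) s := by
  have hs0 : s ≠ 0 := ne_of_gt hs
  have h2 : HasDerivAt (fun s : ℝ => c / s) (-(c/s^2)) s := by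
    simpa [div_eq_mul_inv, mul_neg] using (hasDerivAt_inv hs0).const_mul c
  have h1 : HasDerivAt (fun s : ℝ => s - c/s) (1 - -(c/s^2)) s := (hasDerivAt_id s).sub h2
  have := h1.hasDerivWithinAt (s := Ioi (0:ℝ))
  exact this.congr_deriv (by ring)

lemma glasser_inj {c : ℝ} (hc : 0 < c) : InjOn (fun s : ℝ => s - c/s) (Ioi 0) := by
  have : StrictMonoOn (fun s : ℝ => s - c/s) (Ioi 0) := by
    intro a ha b hb hab
    have ha0 : (0:ℝ) < a := ha
    have hb0 : (0:ℝ) < b := hb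
    have : c/b < c/a := div_lt_div_of_pos_left hc ha0 hab
    simp only
    linarith
  exact this.injOn

lemma glasser_image {c : ℝ} (hc : 0 < c) : (fun s : ℝ => s - c/s) '' (Ioi 0) = univ := by
  apply eq_univ_of_forall
  intro y
  have hD : 0 < Real.sqrt (y^2 + 4*c) := Real.sqrt_pos.mpr (by nlinarith [sq_nonneg y])
  have hDy : -y < Real.sqrt (y^2 + 4*c) := by
    rcases le_or_gt (-y) 0 with h | h
    · linarith
    · have : (-y)^2 < y^2 + 4*c := by nlinarith
      calc -y = Real.sqrt ((-y)^2) := by rw [Real.sqrt_sq h.le]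
        _ < Real.sqrt (y^2 + 4*c) := Real.sqrt_lt_sqrt (sq_nonneg _) this
  set D := Real.sqrt (y^2 + 4*c) with hDdef
  have hD2 : D^2 = y^2 + 4*c := Real.sq_sqrt (by nlinarith [sq_nonneg y])
  have hs0' : (0:ℝ) < (y+D)/2 := by linarith
  refine ⟨(y + D)/2, hs0', ?_⟩
  have hyD : y + D ≠ 0 := by intro h; rw [h] at hs0'; simp at hs0'
  field_simp
  linear_combination hD2

lemma psi_image {c : ℝ} (hc : 0 < c) : (fun s : ℝ => c/s) '' (Ioi 0) = Ioi 0 := by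
  apply Subset.antisymm
  · rintro _ ⟨s, hs, rfl⟩; exact div_pos hc hs
  · intro y hy; exact ⟨c/y, div_pos hc hy, by field_simp⟩

lemma psi_deriv {c : ℝ} {s : ℝ} (hs : s ∈ Ioi (0:ℝ)) :
    HasDerivWithinAt (fun s : ℝ => c/s) (-(c/s^2)) (Ioi 0) s := by
  have hs0 : s ≠ 0 := ne_of_gt hs
  exact (by simpa [div_eq_mul_inv, mul_neg] using (hasDerivAt_inv hs0).const_mul c :
    HasDerivAt (fun s : ℝ => c / s) (-(c/s^2)) s).hasDerivWithinAt

lemma psi_inj {c : ℝ} (hc : 0 < c) : InjOn (fun s : ℝ => c/s) (Ioi 0) := by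
  intro a ha b hb h
  have ha0 : a ≠ 0 := ne_of_gt ha
  have hb0 : b ≠ 0 := ne_of_gt hb
  have h' : c / a = c / b := h
  field_simp at h'
  linarith

lemma step1 {c : ℝ} (hc : 0 < c) :
    (∫ s in Ioi (0:ℝ), (1 + c/s^2) * Real.exp (-(s - c/s)^2)) = Real.sqrt π ∧
    IntegrableOn (fun s : ℝ => (1 + c/s^2) * Real.exp (-(s - c/s)^2)) (Ioi 0) := by
  have hgauss : Integrable (fun x : ℝ => Real.exp (-x^2)) := by
    simpa using integrable_exp_neg_mul_sq (b := 1) one_pos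
  have him := integral_image_eq_integral_abs_deriv_smul measurableSet_Ioi
      (fun s hs => glasser_deriv hs) (glasser_inj hc) (fun x => Real.exp (-x^2))
  rw [glasser_image hc] at him
  have habs : ∀ s ∈ Ioi (0:ℝ), |1 + c/s^2| • Real.exp (-(s - c/s)^2)
      = (1 + c/s^2) * Real.exp (-(s - c/s)^2) := by
    intro s hs
    have : (0:ℝ) < 1 + c/s^2 := by positivity
    rw [abs_of_pos this, smul_eq_mul]
  constructor
  · rw [← setIntegral_congr_fun measurableSet_Ioi habs, ← him]
    rw [setIntegral_univ]
    simpa using integral_gaussian 1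
  · have := (integrableOn_image_iff_integrableOn_abs_deriv_smul measurableSet_Ioi
      (fun s hs => glasser_deriv hs) (glasser_inj hc) (fun x => Real.exp (-x^2))).mp
      (by rw [glasser_image hc]; exact hgauss.integrableOn)
    exact this.congr_fun habs measurableSet_Ioi

lemma step2 {c : ℝ} (hc : 0 < c) :
    (∫ s in Ioi (0:ℝ), Real.exp (-(s - c/s)^2))
      = ∫ s in Ioi (0:ℝ), (c/s^2) * Real.exp (-(s - c/s)^2) := by
  have him := integral_image_eq_integral_abs_deriv_smul measurableSet_Ioi
      (fun s (hs : s ∈ Ioi (0:ℝ)) => psi_deriv hs) (psi_inj hc)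
      (fun v => Real.exp (-(v - c/v)^2))
  rw [psi_image hc] at him
  rw [him]
  apply setIntegral_congr_fun measurableSet_Ioi
  intro s hs
  have hs0 : s ≠ 0 := ne_of_gt hs
  have h1 : c / (c / s) = s := by field_simp
  have h2 : |(-(c/s^2))| = c/s^2 := by
    rw [abs_neg, abs_of_pos (by positivity)]
  simp only [h1, h2, smul_eq_mul]
  congr 2
  ring

lemma contOn_aux1 {c : ℝ} : ContinuousOn (fun s : ℝ => Real.exp (-(s - c/s)^2)) (Ioi 0) := by
  apply Real.continuous_exp.comp_continuousOn
  apply ContinuousOn.neg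
  apply ContinuousOn.pow
  exact continuousOn_id.sub (continuousOn_const.div continuousOn_id (fun s hs => ne_of_gt hs))

lemma contOn_aux2 {c : ℝ} : ContinuousOn (fun s : ℝ => c/s^2) (Ioi 0) :=
  continuousOn_const.div (continuousOn_pow 2) (fun s hs => pow_ne_zero _ (ne_of_gt hs))

lemma glasser_integral {c : ℝ} (hc : 0 < c) :
    (∫ s in Ioi (0:ℝ), Real.exp (-(s - c/s)^2)) = Real.sqrt π / 2 := by
  obtain ⟨hval, hint⟩ := step1 hc
  set f1 : ℝ → ℝ := fun s => Real.exp (-(s - c/s)^2) with hf1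
  set f2 : ℝ → ℝ := fun s => (c/s^2) * Real.exp (-(s - c/s)^2) with hf2
  have hmeas1 : AEStronglyMeasurable f1 (volume.restrict (Ioi 0)) := by
    apply ContinuousOn.aestronglyMeasurable _ measurableSet_Ioi
    exact contOn_aux1
  have hmeas2 : AEStronglyMeasurable f2 (volume.restrict (Ioi 0)) := by
    apply ContinuousOn.aestronglyMeasurable _ measurableSet_Ioi
    exact contOn_aux2.mul contOn_aux1
  have hbound : ∀ᵐ s ∂(volume.restrict (Ioi (0:ℝ))), ‖f1 s‖ ≤ (1 + c/s^2) * Real.exp (-(s - c/s)^2) := by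
    filter_upwards [ae_restrict_mem measurableSet_Ioi] with s hs
    have h1 : (0:ℝ) < 1 + c/s^2 := by positivity
    simp only [hf1]
    rw [Real.norm_eq_abs, abs_of_pos (Real.exp_pos _)]
    nlinarith [Real.exp_pos (-(s - c/s)^2), div_pos hc (pow_pos (show (0:ℝ)<s from hs) 2)]
  have hbound2 : ∀ᵐ s ∂(volume.restrict (Ioi (0:ℝ))), ‖f2 s‖ ≤ (1 + c/s^2) * Real.exp (-(s - c/s)^2) := by
    filter_upwards [ae_restrict_mem measurableSet_Ioi] with s hs
    have hcs : (0:ℝ) < c/s^2 := div_pos hc (pow_pos (show (0:ℝ)<s from hs) 2)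
    simp only [hf2]
    rw [Real.norm_eq_abs, abs_of_pos (by positivity)]
    nlinarith [Real.exp_pos (-(s - c/s)^2)]
  have hint1 : IntegrableOn f1 (Ioi 0) := hint.mono' hmeas1 hbound
  have hint2 : IntegrableOn f2 (Ioi 0) := hint.mono' hmeas2 hbound2
  have hadd : (∫ s in Ioi (0:ℝ), (f1 s + f2 s)) = (∫ s in Ioi (0:ℝ), f1 s) + ∫ s in Ioi (0:ℝ), f2 s :=
    integral_add hint1 hint2
  have heq : ∀ s ∈ Ioi (0:ℝ), f1 s + f2 s = (1 + c/s^2) * Real.exp (-(s - c/s)^2) := by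
    intro s hs; simp only [hf1, hf2]; ring
  rw [setIntegral_congr_fun measurableSet_Ioi heq, hval] at hadd
  have := step2 hc
  rw [← hf1, ← this] at hadd
  linarith

lemma contOn_aux3 {b : ℝ} : ContinuousOn (fun s : ℝ => Real.exp (-s^2 - b/s^2)) (Ioi 0) := by
  apply Real.continuous_exp.comp_continuousOn
  exact (continuousOn_pow 2).neg.sub contOn_aux2

lemma subord_integrable {b : ℝ} (hb : 0 ≤ b) :
    IntegrableOn (fun s : ℝ => Real.exp (-s^2 - b/s^2)) (Ioi 0) := by
  have hgauss : Integrable (fun x : ℝ => Real.exp (-x^2)) := by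
    simpa using integrable_exp_neg_mul_sq (b := 1) one_pos
  apply (hgauss.integrableOn (s := Ioi 0)).mono'
    (contOn_aux3.aestronglyMeasurable measurableSet_Ioi)
  filter_upwards [ae_restrict_mem measurableSet_Ioi] with s hs
  rw [Real.norm_eq_abs, abs_of_pos (Real.exp_pos _)]
  apply Real.exp_le_exp.mpr
  have : 0 ≤ b/s^2 := div_nonneg hb (sq_nonneg s)
  linarith

lemma subord {r : ℝ} (hr : 0 ≤ r) :
    (∫ s in Ioi (0:ℝ), Real.exp (-s^2 - r^2/(4*s^2))) = Real.sqrt π / 2 * Real.exp (-r) := by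
  rcases eq_or_lt_of_le hr with h | h
  · simp only [← h]
    norm_num
    simpa using integral_gaussian_Ioi 1
  · have hc : 0 < r/2 := by linarith
    have heq : ∀ s ∈ Ioi (0:ℝ), Real.exp (-s^2 - r^2/(4*s^2))
        = Real.exp (-r) * Real.exp (-(s - (r/2)/s)^2) := by
      intro s hs
      have hs0 : s ≠ 0 := ne_of_gt hs
      rw [← Real.exp_add]
      congr 1
      field_simp
      ring
    rw [setIntegral_congr_fun measurableSet_Ioi heq, integral_const_mul,
      glasser_integral hc]
    ring

lemma inner_pow_sum_nonneg {n m k : ℕ} (y : Fin m → EuclideanSpace ℝ (Fin n)) (d : Fin m → ℝ) :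
    0 ≤ ∑ i, ∑ j, d i * d j * (inner ℝ (y i) (y j) : ℝ)^k := by
  have hinner : ∀ i j, (inner ℝ (y i) (y j) : ℝ) = ∑ l, y i l * y j l := by
    intro i j
    rw [PiLp.inner_apply]
    simp [RCLike.inner_apply, conj_trivial, mul_comm]
  have h1 : ∀ i j, (inner ℝ (y i) (y j) : ℝ)^k
      = ∑ L ∈ Fintype.piFinset (fun _ : Fin k => (Finset.univ : Finset (Fin n))),
          (∏ t, y i (L t)) * (∏ t, y j (L t)) := by
    intro i j
    rw [hinner]
    calc (∑ l, y i l * y j l)^k = ∏ _t : Fin k, (∑ l, y i l * y j l) := by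
          rw [Finset.prod_const, Finset.card_univ, Fintype.card_fin]
      _ = ∑ L ∈ Fintype.piFinset (fun _ : Fin k => (Finset.univ : Finset (Fin n))),
            ∏ t, y i (L t) * y j (L t) := Finset.prod_univ_sum _ _
      _ = _ := by
          apply Finset.sum_congr rfl
          intro L _
          rw [Finset.prod_mul_distrib]
  calc (0:ℝ) ≤ ∑ L ∈ Fintype.piFinset (fun _ : Fin k => (Finset.univ : Finset (Fin n))),
          (∑ i, d i * ∏ t, y i (L t))^2 :=
        Finset.sum_nonneg (fun L _ => sq_nonneg _)
    _ = ∑ i, ∑ j, d i * d j * (inner ℝ (y i) (y j) : ℝ)^k := by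
        simp_rw [h1, Finset.mul_sum, sq, Finset.sum_mul_sum]
        rw [Finset.sum_comm]
        apply Finset.sum_congr rfl
        intro i _
        rw [Finset.sum_comm]
        apply Finset.sum_congr rfl
        intro j _
        apply Finset.sum_congr rfl
        intro L _
        ring

lemma real_exp_tsum (z : ℝ) : Real.exp z = ∑' k : ℕ, z^k / (Nat.factorial k : ℝ) := by
  rw [Real.exp_eq_exp_ℝ, NormedSpace.exp_eq_tsum_div]

lemma gauss_psd {n m : ℕ} (y : Fin m → EuclideanSpace ℝ (Fin n)) {a : ℝ} (ha : 0 ≤ a)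
    (c : Fin m → ℝ) :
    0 ≤ ∑ i, ∑ j, c i * c j * Real.exp (-(a * ‖y i - y j‖^2)) := by
  set d : Fin m → ℝ := fun i => c i * Real.exp (-(a * ‖y i‖^2)) with hd
  have hexp : ∀ i j : Fin m, c i * c j * Real.exp (-(a * ‖y i - y j‖^2))
      = ∑' k : ℕ, d i * d j * ((2*a*(inner ℝ (y i) (y j) : ℝ))^k / (Nat.factorial k : ℝ)) := by
    intro i j
    calc c i * c j * Real.exp (-(a * ‖y i - y j‖^2))
        = d i * d j * Real.exp (2*a*(inner ℝ (y i) (y j) : ℝ)) := by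
          simp only [hd]
          rw [show (-(a * ‖y i - y j‖^2)) = -(a*‖y i‖^2) + -(a*‖y j‖^2)
                + 2*a*(inner ℝ (y i) (y j) : ℝ) from by rw [norm_sub_sq_real]; ring,
            Real.exp_add, Real.exp_add]
          ring
      _ = d i * d j * ∑' k : ℕ, (2*a*(inner ℝ (y i) (y j) : ℝ))^k / (Nat.factorial k : ℝ) := by
          rw [← real_exp_tsum]
      _ = ∑' k : ℕ, d i * d j * ((2*a*(inner ℝ (y i) (y j) : ℝ))^k / (Nat.factorial k : ℝ)) :=
          tsum_mul_left.symm
  have hsum : ∀ p : Fin m × Fin m,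
      Summable (fun k : ℕ => d p.1 * d p.2 * ((2*a*(inner ℝ (y p.1) (y p.2) : ℝ))^k / (Nat.factorial k : ℝ))) :=
    fun p => (Real.summable_pow_div_factorial _).mul_left _
  calc (0:ℝ)
      ≤ ∑' k : ℕ, ∑ p ∈ Finset.univ ×ˢ Finset.univ,
          d p.1 * d p.2 * ((2*a*(inner ℝ (y p.1) (y p.2) : ℝ))^k / (Nat.factorial k : ℝ)) := by
        apply tsum_nonneg
        intro k
        rw [Finset.sum_product]
        have hterm : ∀ i j : Fin m, d i * d j * ((2*a*(inner ℝ (y i) (y j) : ℝ))^k / (Nat.factorial k : ℝ))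
            = ((2*a)^k/(Nat.factorial k : ℝ)) * (d i * d j * (inner ℝ (y i) (y j) : ℝ)^k) := by
          intro i j; rw [mul_pow]; ring
        simp_rw [hterm, ← Finset.mul_sum]
        apply mul_nonneg
        · apply div_nonneg (pow_nonneg (by linarith) _) (Nat.cast_nonneg _)
        · exact inner_pow_sum_nonneg y d
    _ = ∑ p ∈ Finset.univ ×ˢ Finset.univ,
          ∑' k : ℕ, d p.1 * d p.2 * ((2*a*(inner ℝ (y p.1) (y p.2) : ℝ))^k / (Nat.factorial k : ℝ)) :=
        Summable.tsum_finsetSum (fun p _ => hsum p)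
    _ = ∑ i, ∑ j, c i * c j * Real.exp (-(a * ‖y i - y j‖^2)) := by
        rw [Finset.sum_product]
        exact Finset.sum_congr rfl fun i _ => Finset.sum_congr rfl fun j _ => (hexp i j).symm

lemma quad_pos {n m : ℕ} {x : Fin m → EuclideanSpace ℝ (Fin n)} (hx : Function.Injective x)
    {t : ℝ} (ht : 0 < t) {c : Fin m → ℝ} (hc : c ≠ 0) :
    0 < ∑ i, ∑ j, c i * c j * Real.exp (-(t * dist (x i) (x j))) := by
  have hπ : (0:ℝ) < Real.sqrt π := Real.sqrt_pos.mpr Real.pi_pos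
  -- the inner Gaussian-kernel sum
  set G : ℝ → ℝ := fun s => ∑ i, ∑ j,
    c i * c j * Real.exp (-(t^2/(4*s^2) * ‖x i - x j‖^2)) with hG
  set H : ℝ → ℝ := fun s => ∑ i, ∑ j,
    c i * c j * Real.exp (-s^2 - (t * dist (x i) (x j))^2/(4*s^2)) with hH
  have hHG : ∀ s : ℝ, H s = Real.exp (-s^2) * G s := by
    intro s
    simp only [hH, hG, Finset.mul_sum]
    refine Finset.sum_congr rfl fun i _ => Finset.sum_congr rfl fun j _ => ?_
    rw [dist_eq_norm, show (-s^2 - (t*‖x i - x j‖)^2/(4*s^2))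
      = (-s^2) + (-(t^2/(4*s^2)*‖x i - x j‖^2)) from by ring, Real.exp_add]
    ring
  have hGnn : ∀ s : ℝ, s ∈ Set.Ioi (0:ℝ) → 0 ≤ G s := by
    intro s hs
    simp only [hG]
    exact gauss_psd x (by positivity) c
  -- each entry's integral representation
  have hrep : ∀ i j : Fin m, Real.exp (-(t * dist (x i) (x j)))
      = 2 / Real.sqrt π * ∫ s in Ioi (0:ℝ),
          Real.exp (-s^2 - (t * dist (x i) (x j))^2/(4*s^2)) := by
    intro i j
    rw [subord (by positivity)]
    field_simp
  -- integrability of each entry integrand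
  have hint : ∀ i j : Fin m, IntegrableOn
      (fun s : ℝ => c i * c j * Real.exp (-s^2 - (t * dist (x i) (x j))^2/(4*s^2)))
      (Ioi 0) := by
    intro i j
    have h2 := subord_integrable (b := (t * dist (x i) (x j))^2/4) (by positivity)
    have h3 : IntegrableOn (fun s : ℝ => Real.exp (-s^2 - (t * dist (x i) (x j))^2/(4*s^2)))
        (Ioi 0) := h2.congr_fun (fun s _ => by simp only [div_div]) measurableSet_Ioi
    exact h3.const_mul _
  have hHint : IntegrableOn H (Ioi 0) := by
    simp only [hH]
    apply MeasureTheory.integrable_finset_sum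
    intro i _
    exact MeasureTheory.integrable_finset_sum _ (fun j _ => hint i j)
  -- Q as an integral of H
  have hQ : (∑ i, ∑ j, c i * c j * Real.exp (-(t * dist (x i) (x j))))
      = 2 / Real.sqrt π * ∫ s in Ioi (0:ℝ), H s := by
    simp only [hH]
    rw [MeasureTheory.integral_finset_sum _ (fun i _ =>
      MeasureTheory.integrable_finset_sum _ (fun j _ => hint i j))]
    rw [Finset.mul_sum]
    refine Finset.sum_congr rfl fun i _ => ?_
    rw [MeasureTheory.integral_finset_sum _ (fun j _ => hint i j), Finset.mul_sum]
    refine Finset.sum_congr rfl fun j _ => ?_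
    rw [MeasureTheory.integral_const_mul, hrep i j]
    ring
  -- the constant C = ∑ c i ^ 2 is positive
  obtain ⟨i₀, hi₀⟩ := Function.ne_iff.mp hc
  simp only [Pi.zero_apply] at hi₀
  have hC : 0 < ∑ i, c i * c i := by
    apply Finset.sum_pos' (fun i _ => mul_self_nonneg _)
    exact ⟨i₀, Finset.mem_univ _, mul_self_pos.mpr hi₀⟩
  -- G tends to ∑ c i * c i as s → 0⁺
  have hsq0 : Filter.Tendsto (fun s : ℝ => s^2) (nhdsWithin (0:ℝ) (Set.Ioi (0:ℝ)))
      (nhdsWithin (0:ℝ) (Set.Ioi (0:ℝ))) := by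
    rw [tendsto_nhdsWithin_iff]
    constructor
    · have := ((continuous_pow 2).tendsto (0:ℝ)).mono_left (nhdsWithin_le_nhds (s := Set.Ioi (0:ℝ)))
      simpa using this
    · filter_upwards [self_mem_nhdsWithin] with s hs
      exact pow_pos (Set.mem_Ioi.mp hs) 2
  have hsq : Filter.Tendsto (fun s : ℝ => (s^2)⁻¹) (nhdsWithin (0:ℝ) (Set.Ioi (0:ℝ))) Filter.atTop :=
    tendsto_inv_nhdsGT_zero.comp hsq0
  have hterm : ∀ i j : Fin m, Filter.Tendsto
      (fun s : ℝ => c i * c j * Real.exp (-(t^2/(4*s^2) * ‖x i - x j‖^2)))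
      (nhdsWithin (0:ℝ) (Set.Ioi (0:ℝ))) (nhds (if i = j then c i * c i else 0)) := by
    intro i j
    rcases eq_or_ne i j with rfl | hij
    · simp only [if_pos rfl, sub_self, norm_zero]
      norm_num
    · rw [if_neg hij]
      have hD : (0:ℝ) < ‖x i - x j‖^2 := by
        have h0 : x i - x j ≠ 0 := sub_ne_zero_of_ne (fun h => hij (hx h))
        exact pow_pos (norm_pos_iff.mpr h0) 2
    -- the exponent tends to atTop
      have hexp : Filter.Tendsto (fun s : ℝ => t^2/(4*s^2) * ‖x i - x j‖^2)
          (nhdsWithin (0:ℝ) (Set.Ioi (0:ℝ))) Filter.atTop := by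
        have := hsq.const_mul_atTop (r := t^2*‖x i - x j‖^2/4)
          (div_pos (mul_pos (pow_pos ht 2) hD) (by norm_num))
        apply this.congr'
        filter_upwards [self_mem_nhdsWithin] with s hs
        have hs0 : s ≠ 0 := ne_of_gt hs
        field_simp
      have := Real.tendsto_exp_neg_atTop_nhds_zero.comp hexp
      have h2 := this.const_mul (c i * c j)
      simpa using h2
  have hGC : Filter.Tendsto G (nhdsWithin (0:ℝ) (Set.Ioi (0:ℝ))) (nhds (∑ i, c i * c i)) := by
    have : Filter.Tendsto G (nhdsWithin (0:ℝ) (Set.Ioi (0:ℝ)))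
        (nhds (∑ i, ∑ j, if i = j then c i * c i else 0)) := by
      simp only [hG]
      exact tendsto_finset_sum _ (fun i _ => tendsto_finset_sum _ (fun j _ => hterm i j))
    simpa [Finset.sum_ite_eq] using this
  -- find s₀ > 0 with G s₀ large
  have hev : ∀ᶠ s in nhdsWithin (0:ℝ) (Set.Ioi (0:ℝ)), ((∑ i, c i * c i)/2 < G s ∧ s ∈ Set.Ioi (0:ℝ)) :=
    (hGC.eventually (lt_mem_nhds (by linarith))).and self_mem_nhdsWithin
  obtain ⟨s₀, hs₀G, hs₀⟩ := hev.exists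
  have hHs₀ : 0 < H s₀ := by
    rw [hHG]
    exact mul_pos (Real.exp_pos _) (by linarith)
  -- continuity of H on Ioi 0
  have hHc : ContinuousOn H (Set.Ioi 0) := by
    simp only [hH]
    apply continuousOn_finset_sum
    intro i _
    apply continuousOn_finset_sum
    intro j _
    apply ContinuousOn.mul continuousOn_const
    apply Real.continuous_exp.comp_continuousOn
    apply ContinuousOn.sub (continuousOn_pow 2).neg
    exact continuousOn_const.div ((continuous_const.mul (continuous_pow 2)).continuousOn)
      (fun s hs => by have : (0:ℝ) < s := hs; positivity)
  -- a small interval around s₀ where H is large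
  have hHat : ContinuousAt H s₀ := hHc.continuousAt (isOpen_Ioi.mem_nhds hs₀)
  have hev2 : ∀ᶠ y in nhds s₀, H s₀ / 2 < H y ∧ y ∈ Set.Ioi (0:ℝ) := by
    have e1 : ∀ᶠ y in nhds s₀, H s₀ / 2 < H y := hHat.eventually (lt_mem_nhds (by linarith))
    have e2 : ∀ᶠ y in nhds s₀, y ∈ Set.Ioi (0:ℝ) :=
      isOpen_Ioi.mem_nhds hs₀
    exact e1.and e2
  obtain ⟨ε, hε, hball⟩ := Metric.eventually_nhds_iff.mp hev2
  have hT : ∀ y ∈ Set.Ioo (s₀-ε) (s₀+ε), H s₀/2 < H y ∧ y ∈ Set.Ioi (0:ℝ) := by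
    intro y hy
    apply hball
    rw [Real.dist_eq, abs_lt]
    exact ⟨by linarith [hy.1], by linarith [hy.2]⟩
  have hTsub : Set.Ioo (s₀-ε) (s₀+ε) ⊆ Set.Ioi (0:ℝ) := fun y hy => (hT y hy).2
  have hHnn : 0 ≤ᵐ[MeasureTheory.volume.restrict (Set.Ioi (0:ℝ))] H := by
    filter_upwards [MeasureTheory.ae_restrict_mem measurableSet_Ioi] with s hs
    rw [hHG]
    exact mul_nonneg (Real.exp_pos _).le (hGnn s hs)
  have h1 : (∫ s in Set.Ioo (s₀-ε) (s₀+ε), H s) ≤ ∫ s in Ioi (0:ℝ), H s :=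
    MeasureTheory.setIntegral_mono_set hHint hHnn (HasSubset.Subset.eventuallyLE hTsub)
  have h2 : (H s₀/2) * (MeasureTheory.volume (Set.Ioo (s₀-ε) (s₀+ε))).toReal
      ≤ ∫ s in Set.Ioo (s₀-ε) (s₀+ε), H s :=
    MeasureTheory.setIntegral_ge_of_const_le_real measurableSet_Ioo
      (by rw [Real.volume_Ioo]; exact ENNReal.ofReal_ne_top)
      (fun y hy => (hT y hy).1.le) (hHint.mono_set hTsub)
  have hvol : (MeasureTheory.volume (Set.Ioo (s₀-ε) (s₀+ε))).toReal = 2*ε := by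
    rw [Real.volume_Ioo, ENNReal.toReal_ofReal (by linarith)]
    ring
  have hIpos : 0 < ∫ s in Ioi (0:ℝ), H s := by
    rw [hvol] at h2
    have : 0 < H s₀/2 * (2*ε) := by positivity
    linarith
  rw [hQ]
  exact mul_pos (div_pos two_pos hπ) hIpos

lemma det_analytic {m : ℕ} {M : ℝ → Matrix (Fin m) (Fin m) ℝ} {t₀ : ℝ}
    (h : ∀ i j, AnalyticAt ℝ (fun t => M t i j) t₀) :
    AnalyticAt ℝ (fun t => (M t).det) t₀ := by
  have heq : (fun t => (M t).det)
      = fun t => ∑ σ : Equiv.Perm (Fin m), ((Equiv.Perm.sign σ : ℤ) : ℝ) * ∏ i, M t (σ i) i := by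
    funext t
    rw [Matrix.det_apply']
  rw [heq]
  apply Finset.analyticAt_fun_sum
  intro σ _
  exact analyticAt_const.mul (Finset.analyticAt_fun_prod _ (fun i _ => h (σ i) i))

lemma adjugate_analytic {m : ℕ} {M : ℝ → Matrix (Fin m) (Fin m) ℝ} {t₀ : ℝ}
    (h : ∀ i j, AnalyticAt ℝ (fun t => M t i j) t₀) (i j : Fin m) :
    AnalyticAt ℝ (fun t => (M t).adjugate i j) t₀ := by
  have heq : (fun t => (M t).adjugate i j)
      = fun t => ((M t).updateRow j (Pi.single i 1)).det := by
    funext t; rw [Matrix.adjugate_apply]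
  rw [heq]
  apply det_analytic
  intro k l
  rcases eq_or_ne k j with rfl | hk
  · simp only [Matrix.updateRow_apply, if_pos rfl]
    exact analyticAt_const
  · simp only [Matrix.updateRow_apply, if_neg hk]
    exact h k l

/-- The magnitude function of a finite subset of Euclidean space is real
analytic on `(0, ∞)`; in particular, for every `t > 0` the scaled similarity matrix
`ζ_{tX} (i,j) = exp (-t ‖x i - x j‖)` is positive definite (hence invertible), and
`t ↦ Mag (tX)` is continuous on `(0, ∞)`. -/
theorem magnitude_function_analytic (n m : ℕ) (x : Fin m → EuclideanSpace ℝ (Fin n))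
    (hx : Function.Injective x) :
    (∀ t : ℝ, 0 < t →
      (Matrix.of fun i j => Real.exp (-(t * dist (x i) (x j)))).PosDef) ∧
    AnalyticOnNhd ℝ
      (fun t : ℝ => (fun _ => (1 : ℝ)) ⬝ᵥ
        ((Matrix.of fun i j => Real.exp (-(t * dist (x i) (x j))))⁻¹ *ᵥ fun _ => (1 : ℝ)))
      (Set.Ioi 0) ∧
    ContinuousOn
      (fun t : ℝ => (fun _ => (1 : ℝ)) ⬝ᵥ
        ((Matrix.of fun i j => Real.exp (-(t * dist (x i) (x j))))⁻¹ *ᵥ fun _ => (1 : ℝ)))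
      (Set.Ioi 0) := by
  set A : ℝ → Matrix (Fin m) (Fin m) ℝ :=
    fun t => Matrix.of fun i j => Real.exp (-(t * dist (x i) (x j))) with hA
  have hposdef : ∀ t : ℝ, 0 < t → (A t).PosDef := by
    intro t ht
    refine Matrix.PosDef.of_dotProduct_mulVec_pos ?_ ?_
    · ext i j
      simp only [hA, Matrix.conjTranspose_apply, Matrix.of_apply, star_trivial]
      rw [dist_comm]
    · intro v hv
      have := quad_pos hx ht hv
      calc (0:ℝ) < ∑ i, ∑ j, v i * v j * Real.exp (-(t * dist (x i) (x j))) := this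
        _ = dotProduct (star v) (A t *ᵥ v) := by
          simp only [dotProduct, Matrix.mulVec, star_trivial, Matrix.of_apply,
            Finset.mul_sum]
          refine Finset.sum_congr rfl fun i _ => Finset.sum_congr rfl fun j _ => ?_
          simp only [hA, Matrix.of_apply]
          ring
  have hentries : ∀ (t₀ : ℝ) (i j : Fin m), AnalyticAt ℝ (fun t => A t i j) t₀ := by
    intro t₀ i j
    simp only [hA, Matrix.of_apply]
    exact analyticAt_rexp.comp ((analyticAt_id.mul analyticAt_const).neg)
  have hfun : (fun t : ℝ => (fun _ => (1 : ℝ)) ⬝ᵥ ((A t)⁻¹ *ᵥ fun _ => (1 : ℝ)))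
      = fun t : ℝ => ((fun _ => (1 : ℝ)) ⬝ᵥ ((A t).adjugate *ᵥ fun _ => (1 : ℝ))) * ((A t).det)⁻¹ := by
    funext t
    rw [Matrix.inv_def, Ring.inverse_eq_inv, Matrix.smul_mulVec, dotProduct_smul]
    rw [smul_eq_mul]
    ring
  have hanalytic : AnalyticOnNhd ℝ
      (fun t : ℝ => (fun _ => (1 : ℝ)) ⬝ᵥ ((A t)⁻¹ *ᵥ fun _ => (1 : ℝ))) (Set.Ioi 0) := by
    rw [hfun]
    intro t₀ ht₀
    apply AnalyticAt.mul
    · have : (fun t : ℝ => (fun _ => (1 : ℝ)) ⬝ᵥ ((A t).adjugate *ᵥ fun _ => (1 : ℝ)))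
          = fun t : ℝ => ∑ i, ∑ j, (A t).adjugate i j := by
        funext t
        simp [dotProduct, Matrix.mulVec]
      rw [this]
      apply Finset.analyticAt_fun_sum
      intro i _
      apply Finset.analyticAt_fun_sum
      intro j _
      exact adjugate_analytic (hentries t₀) i j
    · exact (det_analytic (hentries t₀)).inv ((hposdef t₀ ht₀).det_pos.ne')
  exact ⟨hposdef, hanalytic, hanalytic.continuousOn⟩
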